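/- For all integers n ≥ 0, the sequence u_n = Σ_{k=0}^n C(n,k)^2·C(2k,n)^2 satisfies u_n ≡ 4^n (mod 24). -/

import Mathlib

open Finset Nat

open scoped Classical

/-- `g3 n` keeps the ternary digits of `n`, truncated to at most `1`. -/
def g3 : ℕ → ℕ
  | 0 => 0
  | n+1 => 3 * g3 ((n+1)/3) + min ((n+1) % 3) 1
decreasing_by exact Nat.div_lt_self (Nat.succ_pos n) (by norm_num)

lemma g3_succ (n : ℕ) : g3 (n+1) = 3 * g3 ((n+1)/3) + min ((n+1) % 3) 1 := by rw [g3]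

lemma g3_le (n : ℕ) : g3 n ≤ n := by
  induction n using Nat.strong_induction_on with
  | _ n ih =>
    match n with
    | 0 => simp [g3]
    | n+1 =>
      rw [g3_succ]
      have h1 : (n+1)/3 < n+1 := Nat.div_lt_self (Nat.succ_pos n) (by norm_num)
      have h2 := ih _ h1
      omega

lemma lucas3 (n k : ℕ) : ((n.choose k : ℕ) : ZMod 3)
    = (((n % 3).choose (k % 3) : ℕ) : ZMod 3) * (((n / 3).choose (k / 3) : ℕ) : ZMod 3) := by
  haveI : Fact (Nat.Prime 3) := ⟨by norm_num⟩
  have h := (ZMod.intCast_eq_intCast_iff _ _ _).mpr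
    (Choose.choose_modEq_choose_mod_mul_choose_div (p := 3) (n := n) (k := k))
  push_cast at h ⊢
  simpa using h

lemma lucas2 (n k : ℕ) : ((n.choose k : ℕ) : ZMod 2)
    = (((n % 2).choose (k % 2) : ℕ) : ZMod 2) * (((n / 2).choose (k / 2) : ℕ) : ZMod 2) := by
  haveI : Fact (Nat.Prime 2) := ⟨by norm_num⟩
  have h := (ZMod.intCast_eq_intCast_iff _ _ _).mpr
    (Choose.choose_modEq_choose_mod_mul_choose_div (p := 2) (n := n) (k := k))
  push_cast at h ⊢
  simpa using h

/-- `C(2a, a) = 2 * C(2a-1, a-1)` for `a ≥ 1`. -/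
lemma central_eq_two_mul (a : ℕ) (ha : 1 ≤ a) :
    (2*a).choose a = 2 * (2*a-1).choose (a-1) := by
  obtain ⟨b, rfl⟩ := Nat.exists_eq_add_of_le ha
  have h1 : 2 * (1 + b) = (2*b+1) + 1 := by ring
  have h2 : 1 + b = b + 1 := by ring
  rw [h1, h2]
  simp only [Nat.add_sub_cancel]
  rw [Nat.choose_succ_succ]
  have h3 : (2*b+1).choose (b+1) = (2*b+1).choose b := by
    rw [← Nat.choose_symm (show b+1 ≤ 2*b+1 by omega)]
    congr 1
    omega
  rw [h3]
  omega

lemma pw2_double (a : ℕ) (ha : 1 ≤ a) : (∃ j, 2*a = 2^j) ↔ (∃ j, a = 2^j) := by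
  constructor
  · rintro ⟨j, hj⟩
    match j with
    | 0 => omega
    | j+1 => exact ⟨j, by rw [pow_succ] at hj; omega⟩
  · rintro ⟨j, hj⟩
    exact ⟨j+1, by rw [pow_succ]; omega⟩

lemma term_mod3 : ∀ n : ℕ, ∀ k ≤ n,
    ((((2*k).choose k * k.choose (n-k) : ℕ) : ZMod 3))^2 = if k = g3 n then 1 else 0 := by
  intro n
  induction n using Nat.strong_induction_on with
  | _ n ih =>
  intro k hk
  match n with
  | 0 =>
    interval_cases k
    simp [g3]
  | (m+1) =>
    set N := m + 1 with hNdef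
    have hNpos : 1 ≤ N := Nat.succ_pos m
    have hq : N / 3 < N := Nat.div_lt_self hNpos (by norm_num)
    have hgN : g3 N = 3 * g3 (N/3) + min (N % 3) 1 := g3_succ m
    -- abbreviations
    have hL1 := lucas3 (2*k) k
    have hL2 := lucas3 k (N - k)
    rcases (show k % 3 = 0 ∨ k % 3 = 1 ∨ k % 3 = 2 by omega) with hb | hb | hb
    · -- k % 3 = 0
      have e1 : (2*k) % 3 = 0 := by omega
      have e2 : (2*k) / 3 = 2 * (k/3) := by omega
      rcases (show N % 3 = 0 ∨ N % 3 = 1 ∨ N % 3 = 2 by omega) with hr | hr | hr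
      · -- r = 0, no borrow
        have e3 : (N - k) % 3 = 0 := by omega
        have e4 : (N - k) / 3 = N/3 - k/3 := by omega
        have hak : k / 3 ≤ N / 3 := by omega
        have hIH := ih (N/3) hq (k/3) hak
        rw [e1, e2, hb] at hL1
        rw [e3, e4, hb] at hL2
        simp only [Nat.choose_self, Nat.cast_one, one_mul] at hL1 hL2
        have hEq : (k = g3 N) ↔ (k / 3 = g3 (N/3)) := by
          constructor <;> intro h <;> omega
        push_cast [hL1, hL2]
        push_cast at hIH
        rw [hIH]
        simp [hEq]
      · -- r = 1, b = 0 : C(0,1) = 0, k ≠ g3 N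
        have e3 : (N - k) % 3 = 1 := by omega
        rw [e3, hb] at hL2
        have : ((0:ℕ).choose 1 : ZMod 3) = 0 := by norm_num
        rw [this, zero_mul] at hL2
        have hne : k ≠ g3 N := by omega
        push_cast [hL2]
        simp [hne]
      · -- r = 2, b = 0 : C(0,2) = 0
        have e3 : (N - k) % 3 = 2 := by omega
        rw [e3, hb] at hL2
        have : ((0:ℕ).choose 2 : ZMod 3) = 0 := by norm_num
        rw [this, zero_mul] at hL2
        have hne : k ≠ g3 N := by omega
        push_cast [hL2]
        simp [hne]
    · -- k % 3 = 1
      have e1 : (2*k) % 3 = 2 := by omega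
      have e2 : (2*k) / 3 = 2 * (k/3) := by omega
      rw [e1, e2, hb] at hL1
      rcases (show N % 3 = 0 ∨ N % 3 = 1 ∨ N % 3 = 2 by omega) with hr | hr | hr
      · -- r = 0, borrow : C(1,2) = 0
        have e3 : (N - k) % 3 = 2 := by omega
        rw [e3, hb] at hL2
        have : ((1:ℕ).choose 2 : ZMod 3) = 0 := by norm_num
        rw [this, zero_mul] at hL2
        have hne : k ≠ g3 N := by omega
        push_cast [hL2]
        simp [hne]
      · -- r = 1
        have e3 : (N - k) % 3 = 0 := by omega
        have e4 : (N - k) / 3 = N/3 - k/3 := by omega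
        have hak : k / 3 ≤ N / 3 := by omega
        have hIH := ih (N/3) hq (k/3) hak
        rw [e3, e4, hb] at hL2
        have hEq : (k = g3 N) ↔ (k / 3 = g3 (N/3)) := by
          constructor <;> intro h <;> omega
        push_cast at hIH
        push_cast [hL1, hL2]
        have hc : ((Nat.choose 2 1 : ℕ) : ZMod 3) * ((Nat.choose 1 0 : ℕ) : ZMod 3) = 2 := by norm_num
        rw [show ((2:ℕ).choose 1 : ZMod 3) * ((2*(k/3)).choose (k/3) : ℕ)
              * (((1:ℕ).choose 0 : ZMod 3) * ((k/3).choose (N/3 - k/3) : ℕ))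
            = (((2:ℕ).choose 1 : ZMod 3) * (((1:ℕ).choose 0 : ℕ) : ZMod 3))
              * ((((2*(k/3)).choose (k/3) : ℕ) : ZMod 3) * (((k/3).choose (N/3 - k/3) : ℕ) : ZMod 3)) by ring]
        rw [hc, mul_pow, hIH]
        have h4 : (2:ZMod 3)^2 = 1 := by decide
        rw [h4, one_mul]
        simp [hEq]
      · -- r = 2
        have e3 : (N - k) % 3 = 1 := by omega
        have e4 : (N - k) / 3 = N/3 - k/3 := by omega
        have hak : k / 3 ≤ N / 3 := by omega
        have hIH := ih (N/3) hq (k/3) hak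
        rw [e3, e4, hb] at hL2
        have hEq : (k = g3 N) ↔ (k / 3 = g3 (N/3)) := by
          constructor <;> intro h <;> omega
        push_cast at hIH
        push_cast [hL1, hL2]
        rw [show ((2:ℕ).choose 1 : ZMod 3) * ((2*(k/3)).choose (k/3) : ℕ)
              * (((1:ℕ).choose 1 : ZMod 3) * ((k/3).choose (N/3 - k/3) : ℕ))
            = (((2:ℕ).choose 1 : ZMod 3) * (((1:ℕ).choose 1 : ℕ) : ZMod 3))
              * ((((2*(k/3)).choose (k/3) : ℕ) : ZMod 3) * (((k/3).choose (N/3 - k/3) : ℕ) : ZMod 3)) by ring]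
        have hc : ((Nat.choose 2 1 : ℕ) : ZMod 3) * ((Nat.choose 1 1 : ℕ) : ZMod 3) = 2 := by norm_num
        rw [hc, mul_pow, hIH]
        have h4 : (2:ZMod 3)^2 = 1 := by decide
        rw [h4, one_mul]
        simp [hEq]
    · -- k % 3 = 2 : C(1,2) = 0 in first factor
      have e1 : (2*k) % 3 = 1 := by omega
      rw [e1, hb] at hL1
      have : ((1:ℕ).choose 2 : ZMod 3) = 0 := by norm_num
      rw [this, zero_mul] at hL1
      have hg3mod : g3 N % 3 ≤ 1 := by omega
      have hne : k ≠ g3 N := by omega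
      push_cast [hL1]
      simp [hne]

open scoped Classical in
lemma term_mod2 : ∀ n : ℕ, ∀ k, 1 ≤ k → k ≤ n →
    (((2*k-1).choose (k-1) * k.choose (n-k) : ℕ) : ZMod 2)
      = if (k = n ∨ n = 2*k) ∧ (∃ j, k = 2^j) then 1 else 0 := by
  intro n
  induction n using Nat.strong_induction_on with
  | _ n ih =>
  intro k hk1 hkn
  rcases (show k = 1 ∨ (k % 2 = 1 ∧ 3 ≤ k) ∨ (k % 2 = 0 ∧ 2 ≤ k) by omega) with hk | ⟨hko, hk3⟩ | ⟨hke, hk2⟩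
  · -- k = 1
    subst hk
    simp only [show 2*1-1 = 1 from rfl, show (1:ℕ)-1 = 0 from rfl, Nat.choose_zero_right, one_mul]
    rcases (show n = 1 ∨ n = 2 ∨ 3 ≤ n by omega) with hn | hn | hn
    · subst hn
      rw [if_pos ⟨Or.inl rfl, ⟨0, rfl⟩⟩]
      norm_num
    · subst hn
      rw [if_pos ⟨Or.inr rfl, ⟨0, rfl⟩⟩]
      norm_num
    · have h0 : (1:ℕ).choose (n-1) = 0 := Nat.choose_eq_zero_of_lt (by omega)
      rw [h0]
      have hcond : ¬((1 = n ∨ n = 2*1) ∧ (∃ j, (1:ℕ) = 2^j)) := by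
        rintro ⟨h, -⟩; omega
      rw [if_neg hcond]
      norm_num
  · -- k odd, k ≥ 3 : not a power of two, and C(2k-1,k-1) even
    have hL := lucas2 (2*k-1) (k-1)
    have e1 : (2*k-1) % 2 = 1 := by omega
    have e2 : (k-1) % 2 = 0 := by omega
    have e3 : (2*k-1) / 2 = 2 * ((k-1)/2) := by omega
    rw [e1, e2, e3] at hL
    have ha1 : 1 ≤ (k-1)/2 := by omega
    have hcb : (((2*((k-1)/2)).choose ((k-1)/2) : ℕ) : ZMod 2) = 0 := by
      rw [central_eq_two_mul _ ha1]
      push_cast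
      rw [show (2:ZMod 2) = 0 by decide, zero_mul]
    rw [hcb, mul_zero] at hL
    have hnp : ¬(∃ j, k = 2^j) := by
      rintro ⟨j, rfl⟩
      match j with
      | 0 => omega
      | j+1 => rw [pow_succ] at hko hk3; omega
    push_cast [hL]
    simp [hnp]
  · -- k even, k ≥ 2
    have e1 : (2*k-1) % 2 = 1 := by omega
    have e2 : (k-1) % 2 = 1 := by omega
    have e3 : (2*k-1) / 2 = 2*(k/2) - 1 := by omega
    have e4 : (k-1) / 2 = k/2 - 1 := by omega
    have hL1 := lucas2 (2*k-1) (k-1)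
    rw [e1, e2, e3, e4] at hL1
    simp only [Nat.choose_self, Nat.cast_one, one_mul] at hL1
    have hL2 := lucas2 k (n-k)
    rw [show k % 2 = 0 from hke] at hL2
    rcases (show n % 2 = 1 ∨ n % 2 = 0 by omega) with hr | hr
    · -- n odd : C(0,1) = 0, condition false
      have e5 : (n-k) % 2 = 1 := by omega
      rw [e5] at hL2
      have hz : ((0:ℕ).choose 1 : ZMod 2) = 0 := by norm_num
      rw [hz, zero_mul] at hL2
      have hcond : ¬((k = n ∨ n = 2*k) ∧ (∃ j, k = 2^j)) := by
        rintro ⟨h, -⟩; omega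
      push_cast [hL2]
      simp [hcond]
    · -- n even : recurse
      have e5 : (n-k) % 2 = 0 := by omega
      have e6 : (n-k) / 2 = n/2 - k/2 := by omega
      rw [e5, e6] at hL2
      simp only [Nat.choose_self, Nat.cast_one, one_mul] at hL2
      have hq : n / 2 < n := Nat.div_lt_self (by omega) (by norm_num)
      have hIH := ih (n/2) hq (k/2) (by omega) (by omega)
      have hcond : ((k = n ∨ n = 2*k) ∧ (∃ j, k = 2^j))
          ↔ ((k/2 = n/2 ∨ n/2 = 2*(k/2)) ∧ (∃ j, k/2 = 2^j)) := by
        have hp := pw2_double (k/2) (by omega)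
        rw [show 2*(k/2) = k by omega] at hp
        constructor
        · rintro ⟨h, hpow⟩
          exact ⟨by omega, hp.mp hpow⟩
        · rintro ⟨h, hpow⟩
          exact ⟨by omega, hp.mpr hpow⟩
      push_cast at hIH
      push_cast [hL1, hL2]
      rw [hIH]
      exact (if_congr hcond.symm rfl rfl)

/-- The Apéry-like sequence (ε) of the first kind satisfies `uₙ ≡ 4ⁿ (mod 24)`. -/
theorem aperyLikeEpsilon_modEq_four_pow (n : ℕ) :
    (∑ k ∈ Finset.range (n + 1), (n.choose k : ℤ) ^ 2 * ((2 * k).choose n : ℤ) ^ 2)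
      ≡ 4 ^ n [ZMOD 24] := by
  -- Step 1: rewrite each term using `C(n,k)C(2k,n) = C(2k,k)C(k,n-k)`.
  have hterm : ∀ k ∈ Finset.range (n+1),
      (n.choose k : ℤ)^2 * ((2*k).choose n : ℤ)^2
        = (((2*k).choose k * k.choose (n-k) : ℕ) : ℤ)^2 := by
    intro k hk
    have hkn : k ≤ n := by
      have := Finset.mem_range.mp hk; omega
    have key : n.choose k * (2*k).choose n = (2*k).choose k * k.choose (n-k) := by
      rcases le_or_gt n (2*k) with h | h
      · have h2 := Nat.choose_mul (n := 2*k) hkn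
        rw [show 2*k - k = k by omega] at h2
        rw [mul_comm]
        exact h2
      · rw [Nat.choose_eq_zero_of_lt h,
          Nat.choose_eq_zero_of_lt (show k < n - k by omega)]
        simp
    push_cast
    rw [← mul_pow]
    exact_mod_cast congrArg (· ^ 2) key
  rw [Finset.sum_congr rfl hterm]
  set S : ℤ := ∑ k ∈ Finset.range (n+1), (((2*k).choose k * k.choose (n-k) : ℕ) : ℤ)^2 with hS
  -- Step 2: mod 3
  have h3 : S ≡ 4^n [ZMOD 3] := by
    have tm : ∀ k ∈ Finset.range (n+1),
        ((((2*k).choose k * k.choose (n-k) : ℕ) : ZMod 3))^2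
          = if k = g3 n then (1 : ZMod 3) else 0 := by
      intro k hk
      exact term_mod3 n k (by have := Finset.mem_range.mp hk; omega)
    have hcast : ((S : ℤ) : ZMod 3) = ((4^n : ℤ) : ZMod 3) := by
      rw [hS]
      rw [show ((((∑ k ∈ Finset.range (n+1), (((2*k).choose k * k.choose (n-k) : ℕ) : ℤ)^2) : ℤ)) : ZMod 3)
          = ∑ k ∈ Finset.range (n+1), ((((2*k).choose k * k.choose (n-k) : ℕ) : ZMod 3))^2 by
        push_cast; ring]
      rw [Finset.sum_congr rfl tm]
      rw [Finset.sum_ite_eq' (Finset.range (n+1)) (g3 n) (fun _ => (1 : ZMod 3))]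
      rw [if_pos (Finset.mem_range.mpr (by have := g3_le n; omega))]
      push_cast
      rw [show (4 : ZMod 3) = 1 by decide, one_pow]
    exact_mod_cast (ZMod.intCast_eq_intCast_iff _ _ _).mp hcast
  -- Step 3: mod 8
  have h8 : S ≡ 4^n [ZMOD 8] := by
    rcases (show n = 0 ∨ n = 1 ∨ 2 ≤ n by omega) with hn | hn | hn
    · subst hn
      rw [hS]
      norm_num
    · subst hn
      rw [hS]
      norm_num [Finset.sum_range_succ]
    · -- n ≥ 2
      have hsplit : S = ∑ k ∈ Finset.Ico 1 (n+1), (((2*k).choose k * k.choose (n-k) : ℕ) : ℤ)^2 := by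
        rw [hS, Finset.range_eq_Ico, Finset.sum_eq_sum_Ico_succ_bot (by omega)]
        rw [Nat.choose_eq_zero_of_lt (show 0 < n - 0 by omega)]
        push_cast
        ring
      set B : ℕ → ℕ := fun k => (2*k-1).choose (k-1) * k.choose (n-k) with hB
      have hterm2 : ∀ k ∈ Finset.Ico 1 (n+1),
          (((2*k).choose k * k.choose (n-k) : ℕ) : ℤ)^2 = 4 * (B k : ℤ)^2 := by
        intro k hk
        have hk1 : 1 ≤ k := (Finset.mem_Ico.mp hk).1
        rw [hB]
        rw [central_eq_two_mul k hk1]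
        push_cast
        ring
      rw [hsplit, Finset.sum_congr rfl hterm2]
      -- termwise: 4*B^2 ≡ 4*B mod 8
      have hdvd : (8:ℤ) ∣ (∑ k ∈ Finset.Ico 1 (n+1), 4 * (B k : ℤ)^2)
          - (∑ k ∈ Finset.Ico 1 (n+1), 4 * (B k : ℤ)) := by
        rw [← Finset.sum_sub_distrib]
        apply Finset.dvd_sum
        intro k hk
        obtain ⟨c, hc⟩ := Int.even_mul_succ_self ((B k : ℤ) - 1)
        exact ⟨c, by linear_combination 4 * hc⟩
      have hmod : (∑ k ∈ Finset.Ico 1 (n+1), 4 * (B k : ℤ)^2)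
          ≡ (∑ k ∈ Finset.Ico 1 (n+1), 4 * (B k : ℤ)) [ZMOD 8] :=
        (Int.modEq_iff_dvd.mpr hdvd).symm
      -- the linear sum is ≡ 0 mod 8
      have hcast0 : (∑ k ∈ Finset.Ico 1 (n+1), ((B k : ℕ) : ZMod 2)) = 0 := by
        have tm2 : ∀ k ∈ Finset.Ico 1 (n+1),
            ((B k : ℕ) : ZMod 2)
              = (if k = n then (if (∃ j, k = 2^j) then (1:ZMod 2) else 0) else 0)
              + (if (k = n/2 ∧ n % 2 = 0) then (if (∃ j, k = 2^j) then (1:ZMod 2) else 0) else 0) := by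
          intro k hk
          obtain ⟨hk1, hk2⟩ := Finset.mem_Ico.mp hk
          rw [hB]
          rw [term_mod2 n k hk1 (by omega)]
          by_cases hp : (∃ j, k = 2^j)
          · by_cases h1 : k = n
            · have h2 : ¬(k = n/2 ∧ n % 2 = 0) := by omega
              rw [if_pos ⟨Or.inl h1, hp⟩, if_pos h1, if_pos hp, if_neg h2]
              decide
            · by_cases h2 : (k = n/2 ∧ n % 2 = 0)
              · rw [if_pos ⟨Or.inr (by omega), hp⟩, if_neg h1, if_pos h2, if_pos hp]
                decide
              · rw [if_neg (by rintro ⟨h, -⟩; omega), if_neg h1, if_neg h2]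
                decide
          · rw [if_neg (by rintro ⟨-, h⟩; exact hp h), if_neg hp]
            simp
        rw [Finset.sum_congr rfl tm2, Finset.sum_add_distrib]
        rw [Finset.sum_ite_eq' (Finset.Ico 1 (n+1)) n
          (fun k => if (∃ j, k = 2^j) then (1:ZMod 2) else 0)]
        rw [if_pos (Finset.mem_Ico.mpr ⟨by omega, by omega⟩)]
        by_cases hev : n % 2 = 0
        · have tm3 : ∀ k ∈ Finset.Ico 1 (n+1),
              (if (k = n/2 ∧ n % 2 = 0) then (if (∃ j, k = 2^j) then (1:ZMod 2) else 0) else 0)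
                = (if k = n/2 then (if (∃ j, k = 2^j) then (1:ZMod 2) else 0) else 0) := by
            intro k hk
            by_cases h : k = n/2
            · rw [if_pos ⟨h, hev⟩, if_pos h]
            · rw [if_neg (by rintro ⟨h', -⟩; exact h h'), if_neg h]
          rw [Finset.sum_congr rfl tm3]
          rw [Finset.sum_ite_eq' (Finset.Ico 1 (n+1)) (n/2)
            (fun k => if (∃ j, k = 2^j) then (1:ZMod 2) else 0)]
          rw [if_pos (Finset.mem_Ico.mpr ⟨by omega, by omega⟩)]
          have hiff : (∃ j, n = 2^j) ↔ (∃ j, n/2 = 2^j) := by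
            have := pw2_double (n/2) (by omega)
            rw [show 2*(n/2) = n by omega] at this
            exact this
          by_cases hq : (∃ j, n/2 = 2^j)
          · rw [if_pos (hiff.mpr hq), if_pos hq]; decide
          · rw [if_neg (fun h => hq (hiff.mp h)), if_neg hq]; decide
        · have hnp : ¬(∃ j, n = 2^j) := by
            rintro ⟨j, rfl⟩
            match j with
            | 0 => omega
            | j+1 => rw [pow_succ] at hev; omega
          rw [if_neg hnp]
          have tm3 : ∀ k ∈ Finset.Ico 1 (n+1),
              (if (k = n/2 ∧ n % 2 = 0) then (if (∃ j, k = 2^j) then (1:ZMod 2) else 0) else 0)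
                = (0 : ZMod 2) := by
            intro k hk
            rw [if_neg (by rintro ⟨-, h⟩; omega)]
          rw [Finset.sum_congr rfl tm3]
          simp
      have hdvd2 : (2:ℤ) ∣ (∑ k ∈ Finset.Ico 1 (n+1), (B k : ℤ)) := by
        apply (ZMod.intCast_zmod_eq_zero_iff_dvd _ 2).mp
        push_cast
        exact hcast0
      have h4B : (∑ k ∈ Finset.Ico 1 (n+1), 4 * (B k : ℤ)) ≡ 0 [ZMOD 8] := by
        rw [← Finset.mul_sum]
        obtain ⟨c, hc⟩ := hdvd2
        rw [hc]
        exact (Int.modEq_iff_dvd.mpr ⟨c, by ring⟩).symm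
      have h4n : (4:ℤ)^n ≡ 0 [ZMOD 8] := by
        refine (Int.modEq_iff_dvd.mpr ?_).symm
        rw [sub_zero]
        exact dvd_trans ⟨2, by norm_num⟩ (pow_dvd_pow 4 hn)
      exact hmod.trans (h4B.trans h4n.symm)
  -- Step 4: combine
  have hc := (Int.modEq_and_modEq_iff_modEq_mul (by norm_num)).mp ⟨h3, h8⟩
  norm_num at hc
  exact hc
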